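/- Let q be a prime power and n > 1 a positive integer coprime to q, with prime factorization n = p₁^{e₁}···p_s^{e_s}, and define ω = 2·ord_{rad(n)}(q) if q^{ord_{rad(n)}(q)} ≡ 3 (mod 4) and 8 ∣ n, and ω = ord_{rad(n)}(q) otherwise. Then ord_n(q) = ω (equivalently, the Singleton bound and the arithmetic Singleton bound of an irreducible constacyclic code whose generator polynomial has order n coincide) if and only if e_i ≤ v_{p_i}(q^{ω} − 1) for all 1 ≤ i ≤ s. -/
import Mathlib

private lemma ord_dvd_iff_aux (q m k : ℕ) (hm : 1 < m) (hq : 2 ≤ q) :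
    orderOf (q : ZMod m) ∣ k ↔ m ∣ q ^ k - 1 := by
  haveI : NeZero m := ⟨by omega⟩
  rw [orderOf_dvd_iff_pow_eq_one]
  have hcast : (q : ZMod m) ^ k = ((q ^ k : ℕ) : ZMod m) := by push_cast; ring
  rw [hcast, show (1 : ZMod m) = ((1 : ℕ) : ZMod m) by simp,
    ZMod.natCast_eq_natCast_iff]
  have h1 : 1 ≤ q ^ k := Nat.one_le_pow _ _ (by omega)
  constructor
  · intro h
    exact (Nat.modEq_iff_dvd' h1).mp h.symm
  · intro h
    exact ((Nat.modEq_iff_dvd' h1).mpr h).symm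

private lemma ord_pos_aux (q m : ℕ) (hm : 1 < m) (hq : 2 ≤ q) (hco : Nat.Coprime m q) :
    0 < orderOf (q : ZMod m) := by
  have htot : q ^ m.totient ≡ 1 [MOD m] := Nat.ModEq.pow_totient hco.symm
  have hdvd : m ∣ q ^ m.totient - 1 :=
    (Nat.modEq_iff_dvd' (Nat.one_le_pow _ _ (by omega))).mp htot.symm
  have h := (ord_dvd_iff_aux q m m.totient hm hq).mpr hdvd
  have htpos : 0 < m.totient := Nat.totient_pos.mpr (by omega)
  rcases Nat.eq_zero_or_pos (orderOf (q : ZMod m)) with h0 | h0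
  · rw [h0] at h; omega
  · exact h0

/-- With `q` a prime power, `n > 1` coprime to `q`, and `ω` as usual,
`ord_n(q) = ω` (the Singleton and arithmetic Singleton bounds of an irreducible constacyclic
code whose generator polynomial has order `n` coincide) iff `v_p(n) ≤ v_p(q^ω - 1)` for
every prime `p` dividing `n`. -/
theorem singleton_bounds_coincide_iff (q n : ℕ) (hq : IsPrimePow q) (hn : 1 < n)
    (hco : Nat.Coprime n q)
    (r : ℕ) (hr : r = ∏ p ∈ n.primeFactors, p)
    (ω : ℕ) (hω : ω = if q ^ orderOf (q : ZMod r) % 4 = 3 ∧ 8 ∣ n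
      then 2 * orderOf (q : ZMod r) else orderOf (q : ZMod r)) :
    orderOf (q : ZMod n) = ω ↔
      ∀ p ∈ n.primeFactors, n.factorization p ≤ (q ^ ω - 1).factorization p := by
  have hq2 : 2 ≤ q := hq.two_le
  -- r divides n, r > 1, r coprime to q
  have hrdvd : r ∣ n := hr ▸ Nat.prod_primeFactors_dvd n
  obtain ⟨p₀, hp₀, hp₀n⟩ := Nat.exists_prime_and_dvd (by omega : n ≠ 1)
  have hp₀mem : p₀ ∈ n.primeFactors := Nat.mem_primeFactors.mpr ⟨hp₀, hp₀n, by omega⟩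
  have hrpos : 0 < r := by
    rw [hr]
    exact Finset.prod_pos fun p hp => (Nat.prime_of_mem_primeFactors hp).pos
  have hr1 : 1 < r := by
    have : p₀ ∣ r := hr ▸ Finset.dvd_prod_of_mem _ hp₀mem
    have := Nat.le_of_dvd hrpos this
    have := hp₀.two_le
    omega
  have hcor : Nat.Coprime r q := Nat.Coprime.coprime_dvd_left hrdvd hco
  set d := orderOf (q : ZMod r) with hd
  set N := orderOf (q : ZMod n) with hN
  have hdpos : 0 < d := ord_pos_aux q r hr1 hq2 hcor
  have hNpos : 0 < N := ord_pos_aux q n hn hq2 hco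
  -- n ∣ q^N - 1
  have hnN : n ∣ q ^ N - 1 := (ord_dvd_iff_aux q n N hn hq2).mp dvd_rfl
  -- d ∣ N
  have hdN : d ∣ N := by
    rw [hd, ord_dvd_iff_aux q r N hr1 hq2]
    exact dvd_trans hrdvd hnN
  -- ω ∣ N
  have hωN : ω ∣ N := by
    rw [hω]
    split_ifs with hcase
    · obtain ⟨h34, h8⟩ := hcase
      obtain ⟨t, ht⟩ := hdN
      rcases Nat.even_or_odd t with ⟨s, hs⟩ | ⟨s, hs⟩
      · exact ⟨s, by rw [ht, hs]; ring⟩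
      · exfalso
        -- q^N % 4 = 1 since 8 ∣ n ∣ q^N - 1
        have h4 : 4 ∣ q ^ N - 1 := dvd_trans (by norm_num) (dvd_trans h8 hnN)
        have h1 : 1 ≤ q ^ N := Nat.one_le_pow _ _ (by omega)
        obtain ⟨k, hk⟩ := h4
        have hmod1 : q ^ N % 4 = 1 := by omega
        -- but q^N % 4 = 3
        have hmod3 : q ^ N % 4 = 3 := by
          rw [ht, pow_mul, Nat.pow_mod, h34, hs]
          rw [show 2 * s + 1 = s * 2 + 1 by ring, pow_succ, pow_mul]
          rw [Nat.mul_mod, Nat.pow_mod]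
          have h13 : ∀ u : ℕ, 3 ^ u % 4 = 1 ∨ 3 ^ u % 4 = 3 := by
            intro u
            induction u with
            | zero => left; rfl
            | succ m ih =>
              rw [pow_succ, Nat.mul_mod]
              rcases ih with h | h <;> rw [h] <;> norm_num
          rcases h13 s with h | h <;> rw [h] <;> norm_num
        omega
    · exact hdN
  have hωpos : 0 < ω := by
    rw [hω]; split_ifs <;> omega
  -- RHS ↔ n ∣ q^ω - 1
  have hq1 : 1 ≤ q ^ ω - 1 := by
    have : 2 ≤ q ^ ω := by
      calc 2 = 2 ^ 1 := by norm_num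
      _ ≤ q ^ ω := Nat.pow_le_pow_left (by omega) 1 |>.trans
            (Nat.pow_le_pow_right (by omega) hωpos)
    omega
  have hrhs : (∀ p ∈ n.primeFactors, n.factorization p ≤ (q ^ ω - 1).factorization p)
      ↔ n ∣ q ^ ω - 1 := by
    rw [← Nat.factorization_le_iff_dvd (by omega) (by omega)]
    rw [Finsupp.le_iff]
    simp [Nat.support_factorization]
  rw [hrhs, ← ord_dvd_iff_aux q n ω hn hq2, ← hN]
  constructor
  · intro h; rw [h]
  · intro h; exact Nat.dvd_antisymm h hωN
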